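/- Let A, B be bounded linear operators on a complex Hilbert space H. If the range of A is contained in the range of B, then there exists a bounded linear operator C on H such that A = BC. -/

import Mathlib

open ContinuousLinearMap

/-- **Douglas theorem, (i) ⇒ (ii)**: range inclusion implies factorization. -/
theorem douglas_range_subset_implies_factorization
    {H : Type*} [NormedAddCommGroup H] [InnerProductSpace ℂ H] [CompleteSpace H]
    (A B : H →L[ℂ] H) (h : Set.range A ⊆ Set.range B) :
    ∃ C : H →L[ℂ] H, A = B ∘L C := by
  classical
  set K : Submodule ℂ H := LinearMap.ker (B : H →ₗ[ℂ] H) with hKdef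
  have hKclosed : IsClosed (K : Set H) := ContinuousLinearMap.isClosed_ker B
  have : CompleteSpace K := hKclosed.completeSpace_coe
  have hex : ∀ x : H, ∃ z : H, B z = A x := fun x => h ⟨x, rfl⟩
  let f : H → H := fun x =>
    Classical.choose (hex x) - (K.orthogonalProjectionOnto (Classical.choose (hex x)) : H)
  have hfK : ∀ x, f x ∈ Kᗮ := fun x =>
    Submodule.sub_starProjection_mem_orthogonal _
  have hfB : ∀ x, B (f x) = A x := by
    intro x
    have hz := Classical.choose_spec (hex x)
    have hP : (K.orthogonalProjectionOnto (Classical.choose (hex x)) : H) ∈ K :=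
      (K.orthogonalProjectionOnto (Classical.choose (hex x))).2
    have : B (K.orthogonalProjectionOnto (Classical.choose (hex x)) : H) = 0 := hP
    simp only [f, map_sub, this, sub_zero, hz]
  -- uniqueness
  have huniq : ∀ (x : H) (y : H), y ∈ Kᗮ → B y = A x → y = f x := by
    intro x y hy hBy
    have hmem : y - f x ∈ K := by
      simpa [hKdef, LinearMap.mem_ker, map_sub, hBy, hfB x] using
        (show B (y - f x) = 0 by rw [map_sub, hBy, hfB x, sub_self])
    have hmem' : y - f x ∈ Kᗮ := Kᗮ.sub_mem hy (hfK x)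
    have : y - f x = 0 := (K.orthogonal_disjoint).le_bot ⟨hmem, hmem'⟩
    exact sub_eq_zero.mp this
  -- linear map
  let L : H →ₗ[ℂ] H :=
    { toFun := f
      map_add' := by
        intro x y
        refine (huniq (x + y) (f x + f y) (Kᗮ.add_mem (hfK x) (hfK y)) ?_).symm
        rw [map_add, hfB x, hfB y, map_add]
      map_smul' := by
        intro c x
        refine (huniq (c • x) (c • f x) (Kᗮ.smul_mem c (hfK x)) ?_).symm
        rw [map_smul, hfB x, map_smul] }
  have hLcont : Continuous L := by
    apply L.continuous_of_isClosed_graph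
    have hgraph : (L.graph : Set (H × H)) =
        {p : H × H | p.2 ∈ Kᗮ} ∩ {p : H × H | B p.2 - A p.1 = 0} := by
      ext ⟨x, y⟩
      simp only [SetLike.mem_coe, LinearMap.mem_graph_iff, Set.mem_inter_iff, Set.mem_setOf_eq,
        sub_eq_zero]
      constructor
      · rintro rfl
        exact ⟨hfK x, hfB x⟩
      · rintro ⟨hy, hBy⟩
        exact huniq x y hy hBy
    rw [hgraph]
    refine IsClosed.inter ?_ ?_
    · exact K.isClosed_orthogonal.preimage continuous_snd
    · exact isClosed_eq ((B.continuous.comp continuous_snd).sub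
        (A.continuous.comp continuous_fst)) continuous_const
  refine ⟨⟨L, hLcont⟩, ?_⟩
  ext x
  exact (hfB x).symm
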